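/- If f is in the approximation space A_γ (i.e., dist(f, Π_n) ≤ C n^{−γ} for all n ≥ 1) and σ_n satisfies ‖f − σ_n(f)‖ ≤ c · dist(f, Π_{βn}) for a fixed β ∈ (0,1], then sup_{j ≥ 0} 2^{jγ} ‖τ_j(f)‖ < ∞, where τ_0(f)=σ_1(f), τ_j(f)=σ_{2^j}(f)−σ_{2^{j−1}}(f) for j ≥ 1. -/

import Mathlib

/-- Degree of approximation of `f` from the set `Pi'`. -/
noncomputable def degApprox {X : Type*} [NormedAddCommGroup X] (Pi' : Set X) (f : X) : ℝ :=
  sInf ((fun P => ‖f - P‖) '' Pi')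

lemma degApprox_nonneg {X : Type*} [NormedAddCommGroup X] (S : Set X) (f : X) :
    0 ≤ degApprox S f :=
  Real.sInf_nonneg (by rintro x ⟨P, _, rfl⟩; exact norm_nonneg _)

lemma degApprox_bddBelow {X : Type*} [NormedAddCommGroup X] (S : Set X) (f : X) :
    BddBelow ((fun P => ‖f - P‖) '' S) :=
  ⟨0, by rintro x ⟨P, _, rfl⟩; exact norm_nonneg _⟩

lemma degApprox_anti {X : Type*} [NormedAddCommGroup X] {S T : Set X} (f : X)
    (hS : S.Nonempty) (hST : S ⊆ T) : degApprox T f ≤ degApprox S f :=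
  csInf_le_csInf (degApprox_bddBelow T f) (hS.image _) (Set.image_mono hST)

/-- If `f` belongs to the approximation space `A_γ` (i.e. `dist(f,Π_n) ≤ C n^{−γ}`)
and `σ_n` are near-best approximation operators (`‖f − σ_n f‖ ≤ c · dist(f, Π_{βn})`),
then `sup_j 2^{jγ} ‖τ_j f‖ < ∞` for the telescoping operators `τ_j`. -/
theorem approx_space_tau_bounded
    {X : Type*} [NormedAddCommGroup X] [NormedSpace ℝ X]
    (Pi' : ℕ → Set X)
    (hne : ∀ n, (Pi' n).Nonempty)
    (hmono : ∀ m n : ℕ, m ≤ n → Pi' m ⊆ Pi' n)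
    (γ : ℝ) (hγ : 0 < γ) (f : X)
    (C : ℝ) (hC : ∀ n : ℕ, 1 ≤ n → degApprox (Pi' n) f ≤ C * (n : ℝ) ^ (-γ))
    (σ : ℕ → X → X) (β c : ℝ) (hβ : 0 < β) (hβ1 : β ≤ 1) (hc : 0 < c)
    (hσmem : ∀ n g, σ n g ∈ Pi' n)
    (hσnear : ∀ (g : X) (n : ℕ), 1 ≤ n →
      ‖g - σ n g‖ ≤ c * degApprox (Pi' ⌊β * (n : ℝ)⌋₊) g)
    (τ : ℕ → X → X)
    (hτ0 : ∀ g, τ 0 g = σ 1 g)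
    (hτ : ∀ j : ℕ, 1 ≤ j → ∀ g, τ j g = σ (2 ^ j) g - σ (2 ^ (j - 1)) g) :
    ∃ B : ℝ, ∀ j : ℕ, (2 : ℝ) ^ ((j : ℝ) * γ) * ‖τ j f‖ ≤ B := by
  set D : ℕ → ℝ := fun k => degApprox (Pi' k) f with hD
  -- D is antitone
  have hDanti : ∀ {k l : ℕ}, k ≤ l → D l ≤ D k := by
    intro k l hkl
    exact degApprox_anti f (hne k) (hmono k l hkl)
  have hDnonneg : ∀ k, 0 ≤ D k := fun k => degApprox_nonneg _ _
  have hC0 : 0 ≤ C := by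
    have h1 := hC 1 le_rfl
    simp only [Nat.cast_one, Real.one_rpow] at h1
    linarith [hDnonneg 1]
  -- choose N with 1 ≤ β * 2^N
  obtain ⟨N, hN⟩ : ∃ N : ℕ, (1:ℝ)/β < 2 ^ N := pow_unbounded_of_one_lt _ one_lt_two
  have hβN : (1:ℝ) ≤ β * 2 ^ N := by
    rw [div_lt_iff₀ hβ] at hN
    nlinarith
  -- bound on ‖τ j f‖ for j ≥ 1
  have hτbound : ∀ j : ℕ, 1 ≤ j → ‖τ j f‖ ≤ 2 * c * D ⌊β * (2:ℝ) ^ (j-1)⌋₊ := by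
    intro j hj
    rw [hτ j hj f]
    have h1 : ‖σ (2 ^ j) f - σ (2 ^ (j-1)) f‖ ≤ ‖f - σ (2 ^ j) f‖ + ‖f - σ (2 ^ (j-1)) f‖ := by
      have : σ (2 ^ j) f - σ (2 ^ (j-1)) f = (f - σ (2 ^ (j-1)) f) - (f - σ (2 ^ j) f) := by abel
      rw [this]
      exact (norm_sub_le _ _).trans (by rw [add_comm])
    have h2 : ‖f - σ (2 ^ j) f‖ ≤ c * D ⌊β * ((2:ℝ) ^ j)⌋₊ := by
      have := hσnear f (2 ^ j) (Nat.one_le_two_pow)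
      simpa using this
    have h3 : ‖f - σ (2 ^ (j-1)) f‖ ≤ c * D ⌊β * ((2:ℝ) ^ (j-1))⌋₊ := by
      have := hσnear f (2 ^ (j-1)) (Nat.one_le_two_pow)
      simpa using this
    have h4 : D ⌊β * ((2:ℝ) ^ j)⌋₊ ≤ D ⌊β * ((2:ℝ) ^ (j-1))⌋₊ := by
      apply hDanti
      apply Nat.floor_le_floor
      have : (2:ℝ) ^ (j-1) ≤ 2 ^ j := pow_le_pow_right₀ one_le_two (Nat.sub_le _ _)
      nlinarith
    calc ‖σ (2 ^ j) f - σ (2 ^ (j-1)) f‖ ≤ ‖f - σ (2 ^ j) f‖ + ‖f - σ (2 ^ (j-1)) f‖ := h1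
      _ ≤ c * D ⌊β * ((2:ℝ) ^ (j-1))⌋₊ + c * D ⌊β * ((2:ℝ) ^ (j-1))⌋₊ := by
          have := le_trans h2 (by nlinarith [h4] : c * D ⌊β * ((2:ℝ) ^ j)⌋₊ ≤ c * D ⌊β * ((2:ℝ) ^ (j-1))⌋₊)
          linarith
      _ = 2 * c * D ⌊β * ((2:ℝ) ^ (j-1))⌋₊ := by ring
  refine ⟨max ‖τ 0 f‖ (max ((2:ℝ) ^ ((N:ℝ) * γ) * (2 * c * D 0)) (2 * c * C * (4 / β) ^ γ)), ?_⟩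
  intro j
  rcases Nat.eq_zero_or_pos j with rfl | hj
  · simp only [Nat.cast_zero, zero_mul, Real.rpow_zero, one_mul]
    exact le_max_left _ _
  · have hj1 : 1 ≤ j := hj
    have htb := hτbound j hj1
    by_cases hjN : j ≤ N
    · -- small j case
      have h2j : (2:ℝ) ^ ((j:ℝ) * γ) ≤ (2:ℝ) ^ ((N:ℝ) * γ) := by
        apply Real.rpow_le_rpow_of_exponent_le one_le_two
        have : (j:ℝ) ≤ N := Nat.cast_le.mpr hjN
        nlinarith
      have hDle : D ⌊β * ((2:ℝ) ^ (j-1))⌋₊ ≤ D 0 := hDanti (Nat.zero_le _)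
      have : (2:ℝ) ^ ((j:ℝ) * γ) * ‖τ j f‖ ≤ (2:ℝ) ^ ((N:ℝ) * γ) * (2 * c * D 0) := by
        have hpos : (0:ℝ) < (2:ℝ) ^ ((j:ℝ) * γ) := Real.rpow_pos_of_pos two_pos _
        have hτn : ‖τ j f‖ ≤ 2 * c * D 0 := htb.trans (by nlinarith)
        have := mul_le_mul h2j hτn (norm_nonneg _) (le_of_lt (Real.rpow_pos_of_pos two_pos _))
        linarith
      exact this.trans ((le_max_left _ _).trans (le_max_right _ _))
    · -- large j case: N < j, so N ≤ j - 1
      push_neg at hjN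
      have hNj : N ≤ j - 1 := by omega
      set m := ⌊β * ((2:ℝ) ^ (j-1))⌋₊ with hm
      have hx1 : (1:ℝ) ≤ β * 2 ^ (j-1) := by
        have : (2:ℝ) ^ N ≤ 2 ^ (j-1) := pow_le_pow_right₀ one_le_two hNj
        nlinarith
      have hm1 : 1 ≤ m := Nat.le_floor (by exact_mod_cast hx1)
      have hmlow : β * 2 ^ (j-1) / 2 ≤ (m:ℝ) := by
        have hfl : β * 2 ^ (j-1) < m + 1 := Nat.lt_floor_add_one _
        have : (1:ℝ) ≤ (m:ℝ) := by exact_mod_cast hm1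
        nlinarith
      have hDm : D m ≤ C * (m:ℝ) ^ (-γ) := hC m hm1
      have hmpos : (0:ℝ) < β * 2 ^ (j-1) / 2 := by positivity
      have hrpow : ((m:ℝ)) ^ (-γ) ≤ (β * 2 ^ (j-1) / 2) ^ (-γ) := by
        apply Real.rpow_le_rpow_of_nonpos hmpos hmlow (by linarith)
      -- compute: β * 2^(j-1) / 2 = 2^j * (β/4)
      have h2j1 : (2:ℝ) ^ (j-1) = 2 ^ j / 2 := by
        rw [eq_div_iff (two_ne_zero), ← pow_succ]
        congr 1
        omega
      have hkey : (2:ℝ) ^ ((j:ℝ) * γ) * (β * 2 ^ (j-1) / 2) ^ (-γ) = (4/β) ^ γ := by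
        rw [h2j1]
        have hb : β * ((2:ℝ) ^ j / 2) / 2 = (2:ℝ) ^ j * (β / 4) := by ring
        rw [hb]
        have h2jpos : (0:ℝ) < 2 ^ j := by positivity
        have hβ4 : (0:ℝ) < β / 4 := by linarith
        rw [Real.mul_rpow (le_of_lt h2jpos) (le_of_lt hβ4)]
        have e1 : ((2:ℝ) ^ j) ^ (-γ) = (2:ℝ) ^ (-((j:ℝ) * γ)) := by
          rw [← Real.rpow_natCast 2 j, ← Real.rpow_mul (by norm_num)]
          ring_nf
        have e2 : ((β/4) : ℝ) ^ (-γ) = (4/β) ^ γ := by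
          rw [Real.rpow_neg (le_of_lt hβ4), ← Real.inv_rpow (le_of_lt hβ4), inv_div]
        rw [e1, e2, ← mul_assoc, ← Real.rpow_add two_pos]
        simp
      have hp : (0:ℝ) < (2:ℝ)^((j:ℝ)*γ) := Real.rpow_pos_of_pos two_pos _
      have h5 : ‖τ j f‖ ≤ 2*c*(C * (β * 2 ^ (j-1) / 2) ^ (-γ)) := by
        refine htb.trans ?_
        have := hDm.trans (mul_le_mul_of_nonneg_left hrpow hC0)
        nlinarith
      have hfinal : (2:ℝ)^((j:ℝ)*γ) * ‖τ j f‖ ≤ 2*c*C*(4/β)^γ :=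
        calc (2:ℝ)^((j:ℝ)*γ) * ‖τ j f‖
            ≤ (2:ℝ)^((j:ℝ)*γ) * (2*c*(C * (β * 2 ^ (j-1) / 2) ^ (-γ))) :=
              mul_le_mul_of_nonneg_left h5 hp.le
          _ = 2*c*C * ((2:ℝ)^((j:ℝ)*γ) * (β * 2 ^ (j-1) / 2) ^ (-γ)) := by ring
          _ = 2*c*C*(4/β)^γ := by rw [hkey]
      exact hfinal.trans ((le_max_right _ _).trans (le_max_right _ _))
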